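/- Suppose the matrices M_1,…,M_r satisfy conditions (H0), (H1), (H2) and (H3). Then there exist words u, u' ∈ W with σ(u) = σ(u'), o(u) = o(u'), and u ≠ u'. -/

import Mathlib

open Matrix

variable {r : ℕ} {A : Type*}

/-- The `j`-th standard basis vector of `ℤ^r`. -/
def evec (r : ℕ) (j : Fin r) : Fin r → ℤ := fun i => if i = j then 1 else 0

/-- `w` represents a word of shape `m` (only its values on `[0,m]` matter):
`m ≥ 0` and the transition matrices are respected on the box `[0,m]`. -/
def IsWord (M : Fin r → Matrix A A ℤ) (m : Fin r → ℤ) (w : (Fin r → ℤ) → A) : Prop :=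
  0 ≤ m ∧ ∀ (l : Fin r → ℤ) (j : Fin r), 0 ≤ l → l + evec r j ≤ m →
    M j (w (l + evec r j)) (w l) = 1

/-- Two representing functions agree on the box `[0,m]`; this is equality of
words of shape `m`. -/
def AgreeOn (m : Fin r → ℤ) (w w' : (Fin r → ℤ) → A) : Prop :=
  ∀ l : Fin r → ℤ, 0 ≤ l → l ≤ m → w l = w' l

/-- The restriction `w|[k,k+n]`, as a word based at `0`: `(restrictW k w) i = w (i + k)`. -/
def restrictW (k : Fin r → ℤ) (w : (Fin r → ℤ) → A) : (Fin r → ℤ) → A :=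
  fun i => w (i + k)

/-- `w` (a word of shape `m`) is `p`-periodic: the translate `τ_p w`, given by
`(τ_p w)(x) = w (x - p)`, agrees with `w` on `[0,m] ∩ [p,p+m]`. -/
def IsPeriodic (p m : Fin r → ℤ) (w : (Fin r → ℤ) → A) : Prop :=
  ∀ x : Fin r → ℤ, 0 ≤ x → x ≤ m → p ≤ x → x ≤ p + m → w (x - p) = w x

/-- Condition (H0): each `M j` is nonzero. -/
def H0 (M : Fin r → Matrix A A ℤ) : Prop := ∀ j, M j ≠ 0

/-- Condition (H1): unique products of words. -/
def H1 (M : Fin r → Matrix A A ℤ) : Prop :=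
  ∀ (m n : Fin r → ℤ) (u v : (Fin r → ℤ) → A),
    IsWord M m u → IsWord M n v → u m = v 0 →
      (∃ w, IsWord M (m + n) w ∧ AgreeOn m w u ∧ AgreeOn n (restrictW m w) v) ∧
      (∀ w w', IsWord M (m + n) w → AgreeOn m w u → AgreeOn n (restrictW m w) v →
        IsWord M (m + n) w' → AgreeOn m w' u → AgreeOn n (restrictW m w') v →
        AgreeOn (m + n) w w')

/-- Condition (H2): the directed graph on `A` with an edge `a → b` whenever
`M i b a = 1` for some `i` is irreducible. -/
def H2 (M : Fin r → Matrix A A ℤ) : Prop :=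
  ∀ a b : A, Relation.ReflTransGen (fun x y => ∃ i, M i y x = 1) a b

/-- Condition (H3): for each nonzero `p ∈ ℤ^r` there is a non-`p`-periodic word. -/
def H3 (M : Fin r → Matrix A A ℤ) : Prop :=
  ∀ p : Fin r → ℤ, p ≠ 0 → ∃ (m : Fin r → ℤ) (w : (Fin r → ℤ) → A),
    IsWord M m w ∧ ¬ IsPeriodic p m w

/-- Condition (H1a): the matrices commute. -/
def H1a [Fintype A] (M : Fin r → Matrix A A ℤ) : Prop :=
  ∀ i j, M i * M j = M j * M i

/-- Condition (H1b): for `i < j`, the entries of `M i * M j` lie in `{0,1}`. -/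
def H1b [Fintype A] (M : Fin r → Matrix A A ℤ) : Prop :=
  ∀ i j, i < j → ∀ a b : A, (M i * M j) b a = 0 ∨ (M i * M j) b a = 1

/-- Condition (H1c): for `i < j < k`, the entries of `M i * M j * M k` lie in `{0,1}`. -/
def H1c [Fintype A] (M : Fin r → Matrix A A ℤ) : Prop :=
  ∀ i j k, i < j → j < k → ∀ a b : A,
    (M i * M j * M k) b a = 0 ∨ (M i * M j * M k) b a = 1

/-- Condition (H3*). -/
def H3star (M : Fin r → Matrix A A ℤ) : Prop :=
  ∀ (j : Fin r) (m : Fin r → ℤ), m j = 0 → ∀ w : (Fin r → ℤ) → A, IsWord M m w →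
    ∃ u u', IsWord M (m + evec r j) u ∧ IsWord M (m + evec r j) u' ∧
      AgreeOn m u w ∧ AgreeOn m u' w ∧ u (evec r j) ≠ u' (evec r j)

/-- `x` represents the product word `uv` of `u ∈ W_m` and `v ∈ W_n`. -/
def IsProd (M : Fin r → Matrix A A ℤ) (m n : Fin r → ℤ)
    (u v x : (Fin r → ℤ) → A) : Prop :=
  IsWord M (m + n) x ∧ AgreeOn m x u ∧ AgreeOn n (restrictW m x) v

lemma evec_nonneg (r : ℕ) (j : Fin r) : (0 : Fin r → ℤ) ≤ evec r j := by
  intro i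
  by_cases h : i = j <;> simp [evec, h]

lemma evec_ne_zero (r : ℕ) (j : Fin r) : (0 : Fin r → ℤ) ≠ evec r j := by
  intro h
  have := congrFun h j
  simp [evec] at this

lemma box_evec {l : Fin r → ℤ} {i k : Fin r} (hl : 0 ≤ l) (h : l + evec r k ≤ evec r i) :
    k = i ∧ l = 0 := by
  have hk : k = i := by
    by_contra hki
    have h1 := h k
    have h2 := hl k
    simp only [Pi.add_apply, Pi.zero_apply] at h1 h2
    have e1 : evec r k k = 1 := by simp [evec]
    have e2 : evec r i k = 0 := by simp [evec, hki]
    rw [e1, e2] at h1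
    omega
  subst hk
  refine ⟨rfl, funext fun t => ?_⟩
  have h1 := h t
  have h2 := hl t
  simp only [Pi.add_apply, Pi.zero_apply] at h1 h2 ⊢
  by_cases htk : t = k
  · have e1 : evec r k t = 1 := by simp [evec, htk]
    rw [e1] at h1
    omega
  · have e1 : evec r k t = 0 := by simp [evec, htk]
    rw [e1] at h1
    omega

lemma word_pair {M : Fin r → Matrix A A ℤ} {i : Fin r} {a b : A} (hab : M i b a = 1) :
    IsWord M (evec r i) (fun x => if x = evec r i then b else a) := by
  refine ⟨evec_nonneg r i, ?_⟩
  intro l k hl hlk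
  obtain ⟨rfl, rfl⟩ := box_evec hl hlk
  simp [zero_add, evec_ne_zero r k, hab]

lemma word_const {M : Fin r → Matrix A A ℤ} (a : A) : IsWord M 0 (fun _ => a) := by
  refine ⟨le_refl _, fun l k hl hlk => ?_⟩
  exfalso
  have h1 := hlk k
  have h2 := hl k
  simp [evec, Pi.add_apply] at h1 h2
  omega

lemma extend_word {M : Fin r → Matrix A A ℤ} (h1 : H1 M) {m : Fin r → ℤ}
    {w : (Fin r → ℤ) → A} (hw : IsWord M m w) {i : Fin r} {d : A}
    (hd : M i d (w m) = 1) :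
    ∃ w', IsWord M (m + evec r i) w' ∧ AgreeOn m w' w ∧ w' (m + evec r i) = d := by
  have hv := word_pair (r := r) hd
  have hmatch : w m = (fun x => if x = evec r i then d else w m) 0 := by
    show w m = if (0 : Fin r → ℤ) = evec r i then d else w m
    rw [if_neg (evec_ne_zero r i)]
  obtain ⟨x, hx, hxw, hxv⟩ := (h1 m (evec r i) w _ hw hv hmatch).1
  refine ⟨x, hx, hxw, ?_⟩
  have hkey := hxv (evec r i) (evec_nonneg r i) (le_refl _)
  simp only [restrictW, if_pos rfl] at hkey
  rw [add_comm m (evec r i)]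
  exact hkey

lemma word_of_path {M : Fin r → Matrix A A ℤ} (h1 : H1 M) {a b : A}
    (h : Relation.ReflTransGen (fun x y => ∃ i, M i y x = 1) a b) :
    ∃ m w, IsWord M m w ∧ w 0 = a ∧ w m = b := by
  induction h with
  | refl => exact ⟨0, fun _ => a, word_const a, rfl, rfl⟩
  | tail hbc hcd ih =>
    obtain ⟨m, w, hw, hw0, hwm⟩ := ih
    obtain ⟨i, hi⟩ := hcd
    rw [← hwm] at hi
    obtain ⟨w', hw', hagree, hend⟩ := extend_word h1 hw hi
    exact ⟨m + evec r i, w', hw', by rw [hagree 0 (le_refl _) hw.1, hw0], hend⟩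

/-- under (H0)-(H3), there are two distinct words `u, u'` of the
same shape and with the same origin. -/
theorem stmt_14 [Fintype A] [Nonempty A] (hr : 0 < r)
    (M : Fin r → Matrix A A ℤ)
    (hM : ∀ j (a b : A), M j b a = 0 ∨ M j b a = 1)
    (h0 : H0 M) (h1 : H1 M) (h2 : H2 M) (h3 : H3 M) :
    ∃ (m : Fin r → ℤ) (u u' : (Fin r → ℤ) → A),
      IsWord M m u ∧ IsWord M m u' ∧ u 0 = u' 0 ∧ ¬ AgreeOn m u u' := by
  by_contra hcon
  push_neg at hcon
  -- hcon : any two words of the same shape with the same origin agree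
  set j : Fin r := ⟨0, hr⟩ with hj
  -- there is at least one edge in direction j
  have hex : ∃ b0 a0 : A, M j b0 a0 = 1 := by
    by_contra h
    push_neg at h
    apply h0 j
    ext b a
    simp only [Matrix.zero_apply]
    rcases hM j a b with h' | h'
    · exact h'
    · exact absurd h' (h b a)
  obtain ⟨b0, a0, hb0⟩ := hex
  -- uniqueness of successors in every direction
  have hUniq : ∀ (i : Fin r) (a b b' : A), M i b a = 1 → M i b' a = 1 → b = b' := by
    intro i a b b' hb hb'
    have hv := word_pair (M := M) hb
    have hv' := word_pair (M := M) hb'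
    have h00 : (fun x => if x = evec r i then b else a) (0 : Fin r → ℤ)
        = (fun x => if x = evec r i then b' else a) 0 := by
      show (if (0 : Fin r → ℤ) = evec r i then b else a) = if (0 : Fin r → ℤ) = evec r i then b' else a
      rw [if_neg (evec_ne_zero r i), if_neg (evec_ne_zero r i)]
    have hkey := hcon (evec r i) _ _ hv hv' h00 (evec r i) (evec_nonneg r i) (le_refl _)
    simpa using hkey
  -- existence of successors in direction j
  have hsucc : ∀ a : A, ∃ b, M j b a = 1 := by
    intro a
    obtain ⟨m, w, hw, hw0, hwm⟩ := word_of_path h1 (h2 a a0)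
    have hb0' : M j b0 (w m) = 1 := by rw [hwm]; exact hb0
    obtain ⟨w', hw', hagree, _⟩ := extend_word h1 hw hb0'
    have hle : (0 : Fin r → ℤ) + evec r j ≤ m + evec r j := add_le_add_left hw.1 _
    have hstep := hw'.2 0 j (le_refl _) hle
    exact ⟨w' (0 + evec r j), by rwa [hagree 0 (le_refl _) hw.1, hw0] at hstep⟩
  choose f hf using hsucc
  -- f is surjective
  have hsurj : Function.Surjective f := by
    intro b
    have hb0f : f a0 = b0 := hUniq j a0 _ _ (hf a0) hb0
    have path := h2 b0 b
    induction path with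
    | refl => exact ⟨a0, hb0f⟩
    | tail hbc hcd ih =>
      rename_i cmid d
      obtain ⟨a, rfl⟩ := ih
      obtain ⟨i, hi⟩ := hcd
      have hv := word_pair (M := M) (hf a)
      have hdw : M i d ((fun x => if x = evec r j then f a else a) (evec r j)) = 1 := by
        simpa using hi
      obtain ⟨w, hw, hagree, hend⟩ := extend_word h1 hv hdw
      have h1' : M i (w (0 + evec r i)) (w 0) = 1 :=
        hw.2 0 i (le_refl _) (add_le_add_left (evec_nonneg r j) (evec r i))
      have h2' : M j (w ((0 + evec r i) + evec r j)) (w (0 + evec r i)) = 1 :=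
        hw.2 (0 + evec r i) j (by simpa using evec_nonneg r i) (le_of_eq (by abel))
      have heq : (0 + evec r i) + evec r j = evec r j + evec r i := by abel
      rw [heq, hend] at h2'
      exact ⟨w (0 + evec r i), hUniq j _ _ _ (hf _) h2'⟩
  have hinj : Function.Injective f := Finite.injective_iff_surjective.mpr hsurj
  -- f has finite order
  obtain ⟨s, t, hst, hiter_eq⟩ := Finite.exists_ne_map_eq_of_infinite (fun n : ℕ => f^[n])
  have key : ∀ s t : ℕ, s < t → f^[s] = f^[t] → ∀ a, f^[t - s] a = a := by
    intro s t hlt heq a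
    have h1' : f^[s] (f^[t - s] a) = f^[s] a := by
      calc f^[s] (f^[t - s] a) = f^[s + (t - s)] a := (Function.iterate_add_apply f s _ a).symm
        _ = f^[t] a := by rw [Nat.add_sub_cancel' hlt.le]
        _ = f^[s] a := (congrFun heq a).symm
    exact hinj.iterate s h1'
  obtain ⟨c, hc_pos, hc⟩ : ∃ c : ℕ, 0 < c ∧ ∀ a, f^[c] a = a := by
    rcases lt_or_gt_of_ne hst with h | h
    · exact ⟨t - s, by omega, key s t h hiter_eq⟩
    · exact ⟨s - t, by omega, key t s h hiter_eq.symm⟩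
  -- words advance along direction j by iterating f
  have hstep : ∀ (n : ℕ) (m : Fin r → ℤ) (w : (Fin r → ℤ) → A), IsWord M m w →
      ∀ l : Fin r → ℤ, 0 ≤ l → l + (n : ℤ) • evec r j ≤ m →
      w (l + (n : ℤ) • evec r j) = f^[n] (w l) := by
    intro n
    induction n with
    | zero => intro m w hw l hl hbound; simp
    | succ n ih =>
      intro m w hw l hl hbound
      have hsplit : l + ((n + 1 : ℕ) : ℤ) • evec r j
          = (l + (n : ℤ) • evec r j) + evec r j := by
        push_cast
        rw [add_smul, one_smul, add_assoc]
      have h0e : (0 : Fin r → ℤ) ≤ (n : ℤ) • evec r j := by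
        intro i
        simp only [Pi.smul_apply, Pi.zero_apply, smul_eq_mul, evec]
        split <;> positivity
      have hle0 : (0 : Fin r → ℤ) ≤ l + (n : ℤ) • evec r j := add_nonneg hl h0e
      have hle1 : (l + (n : ℤ) • evec r j) + evec r j ≤ m := by rw [← hsplit]; exact hbound
      have hle2 : l + (n : ℤ) • evec r j ≤ m :=
        le_trans (le_add_of_nonneg_right (evec_nonneg r j)) hle1
      have hM1 := hw.2 (l + (n : ℤ) • evec r j) j hle0 hle1
      have hfeq : f (w (l + (n : ℤ) • evec r j))
          = w ((l + (n : ℤ) • evec r j) + evec r j) := hUniq j _ _ _ (hf _) hM1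
      have hrec := ih m w hw l hl hle2
      rw [hsplit, ← hfeq, hrec]
      exact (Function.iterate_succ_apply' f n (w l)).symm
  -- contradiction with (H3) at p = c • e_j
  have hp : ((c : ℤ) • evec r j) ≠ (0 : Fin r → ℤ) := by
    intro h
    have := congrFun h j
    simp [evec, Pi.smul_apply] at this
    omega
  obtain ⟨m, w, hw, hnp⟩ := h3 ((c : ℤ) • evec r j) hp
  apply hnp
  intro x hx0 hxm hpx _
  have hxe : (x - (c : ℤ) • evec r j) + (c : ℤ) • evec r j = x := by abel
  have hbound : (x - (c : ℤ) • evec r j) + (c : ℤ) • evec r j ≤ m := by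
    rw [hxe]; exact hxm
  have hfin := hstep c m w hw (x - (c : ℤ) • evec r j) (sub_nonneg.mpr hpx) hbound
  rw [hxe] at hfin
  rw [hfin, hc]
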